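/- Let p be a prime, and 0 → ℤ_p^a →(i) G →(π) H → 0 an exact sequence of ℤ_p-modules with H finitely generated and annihilated by p^n. Define g : H → ℤ_p^a/p^n ℤ_p^a by g(π(x)) = p^n x mod p^n ℤ_p^a. Then G is isomorphic as a ℤ_p-module to ℤ_p^a ⊕ ker(g). -/

import Mathlib

set_option maxHeartbeats 1000000
set_option synthInstance.maxHeartbeats 400000


/-- Let `0 → ℤ_p^a →(i) G →(π) H → 0` be an exact sequence of `ℤ_p`-modules with `H`
finitely generated and killed by `p^n`, and let `g : H → ℤ_p^a / p^n ℤ_p^a` be the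
`ℤ_p`-linear map with `g(π x) = p^n • x mod p^n ℤ_p^a`.  Then
`G ≅ ℤ_p^a ⊕ ker g` as `ℤ_p`-modules. -/
theorem stmt_1 (p : ℕ) [Fact p.Prime] (a n : ℕ) (G H : Type)
    [AddCommGroup G] [Module ℤ_[p] G] [AddCommGroup H] [Module ℤ_[p] H]
    (i : (Fin a → ℤ_[p]) →ₗ[ℤ_[p]] G) (π : G →ₗ[ℤ_[p]] H)
    (hi : Function.Injective i) (hπ : Function.Surjective π)
    (hexact : LinearMap.range i = LinearMap.ker π)
    (hfg : Module.Finite ℤ_[p] H) (htor : ∀ h : H, ((p : ℤ_[p]) ^ n) • h = 0)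
    (g : H →ₗ[ℤ_[p]]
        ((Fin a → ℤ_[p]) ⧸ LinearMap.range
          (((p : ℤ_[p]) ^ n) • (LinearMap.id : (Fin a → ℤ_[p]) →ₗ[ℤ_[p]] (Fin a → ℤ_[p])))))
    (hg : ∀ (x : G) (y : Fin a → ℤ_[p]), i y = ((p : ℤ_[p]) ^ n) • x →
      g (π x) = Submodule.Quotient.mk y) :
    Nonempty (G ≃ₗ[ℤ_[p]] ((Fin a → ℤ_[p]) × LinearMap.ker g)) := by
  classical
  let R := ℤ_[p]
  let F := (Fin a → ℤ_[p])
  let c : R := (p : ℤ_[p]) ^ n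
  have hcne : c ≠ 0 := by
    apply pow_ne_zero
    exact_mod_cast (Fact.out : p.Prime).ne_zero
  -- the map e : F ≃ range i
  let e : F ≃ₗ[R] LinearMap.range i := LinearEquiv.ofInjective i hi
  have hmem : ∀ x : G, c • x ∈ LinearMap.range i := by
    intro x
    rw [hexact, LinearMap.mem_ker, map_smul, htor]
  -- the map f : G → F with i (f x) = c • x
  let f : G →ₗ[R] F := e.symm.toLinearMap ∘ₗ
    ((c • (LinearMap.id : G →ₗ[R] G)).codRestrict (LinearMap.range i) hmem)
  have hif : ∀ x : G, i (f x) = c • x := by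
    intro x
    have h1 : e (f x) = ⟨c • x, hmem x⟩ := e.apply_symm_apply _
    have h2 : (e (f x) : G) = i (f x) := rfl
    rw [h1] at h2
    exact h2.symm
  have hfi : ∀ y : F, f (i y) = c • y := by
    intro y
    apply hi
    rw [hif, map_smul]
  have hgπ : ∀ x : G, g (π x) = Submodule.Quotient.mk (f x) := by
    intro x
    exact hg x (f x) (hif x)
  -- π maps ker f into ker g
  have hmap : ∀ x ∈ LinearMap.ker f, π x ∈ LinearMap.ker g := by
    intro x hx
    rw [LinearMap.mem_ker] at hx ⊢
    rw [hgπ, hx]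
    simp
  let φ : LinearMap.ker f →ₗ[R] LinearMap.ker g := π.restrict hmap
  have hφinj : Function.Injective φ := by
    rintro ⟨x, hx⟩ ⟨y, hy⟩ hxy
    have hxy' : π (x - y) = 0 := by
      have := congrArg Subtype.val hxy
      simp only [φ, LinearMap.restrict_apply] at this
      rw [map_sub, this, sub_self]
    ext
    have : x - y ∈ LinearMap.range i := by rw [hexact, LinearMap.mem_ker]; exact hxy'
    obtain ⟨z, hz⟩ := this
    rw [LinearMap.mem_ker] at hx hy
    have hfz : f (x - y) = 0 := by rw [map_sub, hx, hy, sub_self]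
    rw [← hz, hfi] at hfz
    have hz0 : z = 0 := by
      rcases smul_eq_zero.mp hfz with h | h
      · exact absurd h hcne
      · exact h
    rw [hz0, map_zero] at hz
    exact sub_eq_zero.mp hz.symm
  have hφsurj : Function.Surjective φ := by
    rintro ⟨h', hh'⟩
    obtain ⟨x, hx⟩ := hπ h'
    rw [LinearMap.mem_ker] at hh'
    rw [← hx, hgπ] at hh'
    have : f x ∈ LinearMap.range (c • (LinearMap.id : F →ₗ[R] F)) :=
      (Submodule.Quotient.mk_eq_zero _).mp hh'
    obtain ⟨z, hz⟩ := this
    simp only [LinearMap.smul_apply, LinearMap.id_apply] at hz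
    refine ⟨⟨x - i z, ?_⟩, ?_⟩
    · rw [LinearMap.mem_ker, map_sub, hfi, hz, sub_self]
    · ext
      simp only [φ, LinearMap.restrict_apply, map_sub]
      have : π (i z) = 0 := by
        rw [← LinearMap.mem_ker, ← hexact]; exact ⟨z, rfl⟩
      rw [this, sub_zero, hx]
  let eK : LinearMap.ker f ≃ₗ[R] LinearMap.ker g :=
    LinearEquiv.ofBijective φ ⟨hφinj, hφsurj⟩
  -- range f is free of rank a
  haveI : Module.Finite R (LinearMap.range f) :=
    Module.Finite.iff_fg.mpr (IsNoetherian.noetherian _)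
  haveI : Module.Free R (LinearMap.range f) := inferInstance
  have hrank : Module.finrank R (LinearMap.range f) = a := by
    apply le_antisymm
    · have := Submodule.finrank_le (LinearMap.range f)
      rwa [Module.finrank_fin_fun] at this
    · -- inject F into range f via y ↦ f (i y)
      let ψ : F →ₗ[R] LinearMap.range f := (f ∘ₗ i).codRestrict _ (fun y => by simpa using LinearMap.mem_range_self f (i y))
      have hψ : Function.Injective ψ := by
        intro y₁ y₂ hy
        have := congrArg Subtype.val hy
        simp only [ψ, LinearMap.codRestrict_apply, LinearMap.comp_apply] at this
        rw [hfi, hfi] at this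
        exact smul_right_injective F hcne this
      have := LinearMap.finrank_le_finrank_of_injective hψ
      rwa [Module.finrank_fin_fun] at this
  -- range f ≃ F
  let b := Module.Free.chooseBasis R (LinearMap.range f)
  have hcard : Fintype.card (Module.Free.ChooseBasisIndex R (LinearMap.range f))
      = Fintype.card (Fin a) := by
    rw [Fintype.card_fin, ← Module.finrank_eq_card_chooseBasisIndex]
    exact hrank
  let eR : LinearMap.range f ≃ₗ[R] F :=
    b.equiv (Pi.basisFun R (Fin a)) (Fintype.equivOfCardEq hcard)
  -- splitting
  have hex := f.rangeRestrict.exact_subtype_ker_map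
  rw [LinearMap.ker_rangeRestrict] at hex
  obtain ⟨s, hs⟩ := Module.projective_lifting_property f.rangeRestrict LinearMap.id
    f.surjective_rangeRestrict
  obtain ⟨eG, -⟩ := hex.splitSurjectiveEquiv (Submodule.injective_subtype _) ⟨s, hs⟩
  exact ⟨eG.trans ((eK.prodCongr eR).trans (LinearEquiv.prodComm R _ _))⟩
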